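/- In the ring R = ℚ[c₁,c₂,d₂]/I as above, setting c₃ := (4c₁d₂ − c₁³)/3 one has the identities c₁·c₃ = c₂² − 3c₂d₂ + 3d₂² and 9·d₂³ = 2·(4c₁d₂ − c₁³)² (equivalently d₂³ = 2c₃²). -/
import Mathlib


open MvPolynomial

noncomputable section

abbrev c1 : MvPolynomial (Fin 3) ℚ := X 0
abbrev c2 : MvPolynomial (Fin 3) ℚ := X 1
abbrev d2 : MvPolynomial (Fin 3) ℚ := X 2

def chowIdeal : Ideal (MvPolynomial (Fin 3) ℚ) :=
  Ideal.span {c1 ^ 4 + 3 * c2 ^ 2 - 9 * c2 * d2 - 3 * d2 ^ 2,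
    c1 ^ 2 * c2 - c2 * d2 - 3 * d2 ^ 2,
    c1 ^ 2 * d2 - 3 * d2 ^ 2,
    9 * c1 * c2 ^ 2 - 14 * c1 * c2 * d2,
    3 * c1 * d2 ^ 2 - 2 * c1 * c2 * d2}

/-- `c₃ = (4c₁d₂ − c₁³)/3`, the third Chern class `c₃(U₂*)`. -/
def c3 : MvPolynomial (Fin 3) ℚ := C (1 / 3) * (4 * c1 * d2 - c1 ^ 3)

/-- In `R = ℚ[c₁,c₂,d₂]/I`, with `c₃ = (4c₁d₂ − c₁³)/3`, one has
`c₁·c₃ = c₂² − 3c₂d₂ + 3d₂²` and `9d₂³ = 2(4c₁d₂ − c₁³)²` (i.e. `d₂³ = 2c₃²`). -/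
theorem c3_identities :
    Ideal.Quotient.mk chowIdeal (c1 * c3) =
      Ideal.Quotient.mk chowIdeal (c2 ^ 2 - 3 * c2 * d2 + 3 * d2 ^ 2) ∧
    Ideal.Quotient.mk chowIdeal (9 * d2 ^ 3) =
      Ideal.Quotient.mk chowIdeal (2 * (4 * c1 * d2 - c1 ^ 3) ^ 2) := by
  have h1 : c1 ^ 4 + 3 * c2 ^ 2 - 9 * c2 * d2 - 3 * d2 ^ 2 ∈ chowIdeal :=
    Ideal.subset_span (by simp [Set.mem_insert_iff])
  have h2 : c1 ^ 2 * c2 - c2 * d2 - 3 * d2 ^ 2 ∈ chowIdeal :=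
    Ideal.subset_span (by simp [Set.mem_insert_iff])
  have h3 : c1 ^ 2 * d2 - 3 * d2 ^ 2 ∈ chowIdeal :=
    Ideal.subset_span (by simp [Set.mem_insert_iff])
  have h4 : 9 * c1 * c2 ^ 2 - 14 * c1 * c2 * d2 ∈ chowIdeal :=
    Ideal.subset_span (by simp [Set.mem_insert_iff])
  have h5 : 3 * c1 * d2 ^ 2 - 2 * c1 * c2 * d2 ∈ chowIdeal :=
    Ideal.subset_span (by simp [Set.mem_insert_iff])
  have ht3 : (C (1/3 : ℚ) : MvPolynomial (Fin 3) ℚ) * 3 = 1 := by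
    rw [show ((3 : MvPolynomial (Fin 3) ℚ)) = C (3 : ℚ) by rw [map_ofNat], ← map_mul]
    norm_num
  have ht9 : (C (1/9 : ℚ) : MvPolynomial (Fin 3) ℚ) * 9 = 1 := by
    rw [show ((9 : MvPolynomial (Fin 3) ℚ)) = C (9 : ℚ) by rw [map_ofNat], ← map_mul]
    norm_num
  constructor
  · rw [Ideal.Quotient.eq]
    have key : c1 * c3 - (c2 ^ 2 - 3 * c2 * d2 + 3 * d2 ^ 2) =
        C (1/3 : ℚ) * (4 * (c1 ^ 2 * d2 - 3 * d2 ^ 2)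
          - (c1 ^ 4 + 3 * c2 ^ 2 - 9 * c2 * d2 - 3 * d2 ^ 2)) := by
      simp only [c3]
      linear_combination (c2 ^ 2 - 3 * c2 * d2 + 3 * d2 ^ 2) * ht3
    rw [key]
    refine Ideal.mul_mem_left _ _ ?_
    exact Ideal.sub_mem _ (Ideal.mul_mem_left _ _ h3) h1
  · rw [Ideal.Quotient.eq]
    have key : 9 * d2 ^ 3 - 2 * (4 * c1 * d2 - c1 ^ 3) ^ 2 =
        C (1/9 : ℚ) *
          ((144 * d2 - 18 * c1 ^ 2) * (c1 ^ 4 + 3 * c2 ^ 2 - 9 * c2 * d2 - 3 * d2 ^ 2) +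
           (432 * c2 - 750 * d2) * (c1 ^ 2 * c2 - c2 * d2 - 3 * d2 ^ 2) +
           (579 * d2 - 614 * c2) * (c1 ^ 2 * d2 - 3 * d2 ^ 2) +
           (-(42 * c1)) * (9 * c1 * c2 ^ 2 - 14 * c1 * c2 * d2) +
           (-(307 * c1)) * (3 * c1 * d2 ^ 2 - 2 * c1 * c2 * d2)) := by
      linear_combination (-(9 * d2 ^ 3 - 2 * (4 * c1 * d2 - c1 ^ 3) ^ 2)) * ht9
    rw [key]
    refine Ideal.mul_mem_left _ _ ?_
    exact Ideal.add_mem _ (Ideal.add_mem _ (Ideal.add_mem _ (Ideal.add_mem _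
      (Ideal.mul_mem_left _ _ h1) (Ideal.mul_mem_left _ _ h2))
      (Ideal.mul_mem_left _ _ h3)) (Ideal.mul_mem_left _ _ h4))
      (Ideal.mul_mem_left _ _ h5)


end
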